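/- (Lemma E.2, bound on forced plays of the safe action) Fix a ∈ ℝ^d with ‖a‖ ≤ 1, let {a_s} be any sequence of vectors in ℝ^d, V_t := I + Σ_{s<t}a_s a_sᵀ, and n_t := #{s < t : a_s = a}. Then ‖a‖²_{V_t^{-1}} ≤ ‖a‖²/(1 + n_t‖a‖²), and in particular ‖a‖²_{V_t^{-1}} ≤ 1/n_t whenever n_t ≥ 1. Consequently, when S-COLTS is run with any Γ0 > 0 and B-concentrated μ, for every horizon T the number of rounds t ≤ T at which S-COLTS plays a_safe because M_t(a_safe) > Γ0/3 is at most 9·ω_T(δ)²·B_T²/Γ0² + 1. -/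

import Mathlib

open Finset
open scoped Matrix

/-- Weighted norm `‖v‖_M = ‖M^{1/2} v‖ = √(vᵀ M v)` for a positive-semidefinite matrix `M`. -/
noncomputable def wnorm {d : ℕ} (M : Matrix (Fin d) (Fin d) ℝ) (v : Fin d → ℝ) : ℝ :=
  Real.sqrt (v ⬝ᵥ M.mulVec v)

/-- `V_t = I + ∑_{s < t} a_s a_sᵀ` (rounds indexed from `1`). -/
noncomputable def Vmat {d : ℕ} (a : ℕ → Fin d → ℝ) (t : ℕ) : Matrix (Fin d) (Fin d) ℝ :=
  1 + ∑ s ∈ Finset.Ico 1 t, Matrix.vecMulVec (a s) (a s)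

/-- The confidence radius `ω_t(δ) = 1 + √(½ log((m+1)/δ) + ¼ log det V_t)`. -/
noncomputable def omrad (m : ℕ) (δ : ℝ) {d : ℕ} (V : Matrix (Fin d) (Fin d) ℝ) : ℝ :=
  1 + Real.sqrt ((1 / 2) * Real.log ((m + 1) / δ) + (1 / 4) * Real.log V.det)

/-- Number of rounds `s < t` at which the sequence `acts` equals `a`. -/
noncomputable def playCount {d : ℕ} (acts : ℕ → Fin d → ℝ) (a : Fin d → ℝ) (t : ℕ) : ℕ :=
  ((Finset.Ico 1 t).filter fun s => acts s = a).card

lemma sumMulVec {d : ℕ} {ι : Type*} (u : Finset ι) (f : ι → Matrix (Fin d) (Fin d) ℝ)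
    (x : Fin d → ℝ) : (∑ s ∈ u, f s) *ᵥ x = ∑ s ∈ u, (f s *ᵥ x) := by
  ext i
  simp [Matrix.mulVec, dotProduct, Finset.sum_apply, Matrix.sum_apply, Finset.sum_mul]
  rw [Finset.sum_comm]

lemma dotSum {d : ℕ} {ι : Type*} (u : Finset ι) (f : ι → Fin d → ℝ) (x : Fin d → ℝ) :
    x ⬝ᵥ (∑ s ∈ u, f s) = ∑ s ∈ u, x ⬝ᵥ f s := by
  simp [dotProduct, Finset.sum_apply, Finset.mul_sum]
  rw [Finset.sum_comm]

lemma vmvQuad {d : ℕ} (u x : Fin d → ℝ) :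
    x ⬝ᵥ (Matrix.vecMulVec u u *ᵥ x) = (u ⬝ᵥ x)^2 := by
  simp [Matrix.mulVec, dotProduct, Matrix.vecMulVec_apply, Finset.mul_sum,
    Finset.sum_mul, sq]
  exact Finset.sum_congr rfl fun i _ => Finset.sum_congr rfl fun j _ => by ring

lemma quadForm {d : ℕ} (a : ℕ → Fin d → ℝ) (t : ℕ) (x : Fin d → ℝ) :
    x ⬝ᵥ (Vmat a t).mulVec x = x ⬝ᵥ x + ∑ s ∈ Finset.Ico 1 t, (a s ⬝ᵥ x)^2 := by
  simp only [Vmat, Matrix.add_mulVec, Matrix.one_mulVec, dotProduct_add]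
  rw [sumMulVec, dotSum]
  exact congrArg _ (Finset.sum_congr rfl fun s _ => vmvQuad _ _)

lemma dotSelfNonneg {d : ℕ} (x : Fin d → ℝ) : 0 ≤ x ⬝ᵥ x :=
  Finset.sum_nonneg fun i _ => mul_self_nonneg _

lemma VmatPD {d : ℕ} (a : ℕ → Fin d → ℝ) (t : ℕ) : (Vmat a t).PosDef := by
  refine Matrix.posDef_iff_dotProduct_mulVec.mpr ⟨?_, ?_⟩
  · ext i j
    simp [Vmat, Matrix.conjTranspose_apply, Matrix.one_apply, Matrix.sum_apply,
      Matrix.vecMulVec_apply, mul_comm, eq_comm]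
  · intro x hx
    rw [star_trivial, quadForm]
    have h1 : 0 < x ⬝ᵥ x :=
      lt_of_le_of_ne (dotSelfNonneg x) fun h => hx (dotProduct_self_eq_zero.mp h.symm)
    have h2 : 0 ≤ ∑ s ∈ Finset.Ico 1 t, (a s ⬝ᵥ x)^2 :=
      Finset.sum_nonneg fun s _ => sq_nonneg _
    linarith

lemma keyIneq {d : ℕ} (a : Fin d → ℝ) (acts' : ℕ → Fin d → ℝ) (t : ℕ) :
    0 ≤ a ⬝ᵥ (Vmat acts' t)⁻¹ *ᵥ a ∧
    a ⬝ᵥ (Vmat acts' t)⁻¹ *ᵥ a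
      ≤ (a ⬝ᵥ a) / (1 + (((Finset.Ico 1 t).filter fun s => acts' s = a).card : ℝ) * (a ⬝ᵥ a)) := by
  set V := Vmat acts' t with hVdef
  set x := V⁻¹ *ᵥ a with hxdef
  set q := a ⬝ᵥ x with hqdef
  set n : ℝ := (((Finset.Ico 1 t).filter fun s => acts' s = a).card : ℝ) with hndef
  set s := a ⬝ᵥ a with hsdef
  have hs0 : 0 ≤ s := dotSelfNonneg a
  have hn0 : 0 ≤ n := Nat.cast_nonneg _
  have hdenom : 0 < 1 + n * s := by nlinarith
  have hdet : IsUnit V.det := (VmatPD acts' t).det_pos.ne'.isUnit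
  have hVx : V *ᵥ x = a := by
    rw [hxdef, Matrix.mulVec_mulVec, Matrix.mul_nonsing_inv _ hdet, Matrix.one_mulVec]
  have hq2 : x ⬝ᵥ (V *ᵥ x) = q := by rw [hVx, dotProduct_comm]
  have hquad : q = x ⬝ᵥ x + ∑ r ∈ Finset.Ico 1 t, (acts' r ⬝ᵥ x)^2 := by
    rw [← hq2, quadForm]
  have hu0 : 0 ≤ x ⬝ᵥ x := dotSelfNonneg x
  have hsum0 : 0 ≤ ∑ r ∈ Finset.Ico 1 t, (acts' r ⬝ᵥ x)^2 :=
    Finset.sum_nonneg fun r _ => sq_nonneg _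
  have hq0 : 0 ≤ q := by rw [hquad]; linarith
  refine ⟨hq0, ?_⟩
  -- the filtered sum lower bound
  have hfsum : n * q^2 ≤ ∑ r ∈ Finset.Ico 1 t, (acts' r ⬝ᵥ x)^2 := by
    have h1 : ∑ r ∈ (Finset.Ico 1 t).filter (fun r => acts' r = a), (acts' r ⬝ᵥ x)^2
        ≤ ∑ r ∈ Finset.Ico 1 t, (acts' r ⬝ᵥ x)^2 :=
      Finset.sum_le_sum_of_subset_of_nonneg (Finset.filter_subset _ _)
        (fun r _ _ => sq_nonneg _)
    have h2 : ∑ r ∈ (Finset.Ico 1 t).filter (fun r => acts' r = a), (acts' r ⬝ᵥ x)^2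
        = n * q^2 := by
      rw [Finset.sum_congr rfl (fun r hr => by
        rw [(Finset.mem_filter.mp hr).2]), Finset.sum_const, nsmul_eq_mul]
    linarith [h1, h2.symm.le]
  have hkey : q ≤ 2 * q - (x ⬝ᵥ x) - n * q^2 := by nlinarith [hquad, hfsum]
  -- Cauchy-type bound: 0 ≤ ‖x - c • a‖²
  set c : ℝ := 1 / (1 + n * s) with hcdef
  have hc : c * (1 + n * s) = 1 := by
    rw [hcdef]; field_simp
  have hCS : 0 ≤ (x ⬝ᵥ x) - 2 * c * q + c^2 * s := by
    have h := dotSelfNonneg (x - c • a)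
    have hexp : (x - c • a) ⬝ᵥ (x - c • a) = (x ⬝ᵥ x) - 2 * c * q + c^2 * s := by
      rw [sub_dotProduct, dotProduct_sub, dotProduct_sub,
        smul_dotProduct, dotProduct_smul, smul_dotProduct,
        dotProduct_smul]
      have : a ⬝ᵥ x = q := rfl
      have hxa : x ⬝ᵥ a = q := by rw [dotProduct_comm]
      rw [hxa, this]
      simp only [smul_eq_mul]
      ring
    linarith [hexp ▸ h]
  have key2 : (1 + n*s)^2 * (x ⬝ᵥ x - 2*c*q + c^2*s)
      = (1 + n*s)^2 * (x ⬝ᵥ x) - 2*(1 + n*s)*q + s := by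
    linear_combination ((-2)*q*(1 + n*s) + s*(c*(1 + n*s) + 1)) * hc
  have hCS2 : 0 ≤ (1 + n*s)^2 * (x ⬝ᵥ x) - 2*(1 + n*s)*q + s := by
    have h2 := mul_nonneg (sq_nonneg (1 + n*s)) hCS
    rw [key2] at h2
    exact h2
  have hfinal : 2 * q - (x ⬝ᵥ x) - n * q^2 ≤ s / (1 + n * s) := by
    rw [le_div_iff₀ hdenom]
    nlinarith [hCS2, mul_nonneg hn0 (sq_nonneg ((1 + n*s)*q - s)), hdenom]
  calc q ≤ 2 * q - (x ⬝ᵥ x) - n * q^2 := hkey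
    _ ≤ s / (1 + n * s) := hfinal

lemma part1 {d : ℕ} (a : Fin d → ℝ) (ha : Real.sqrt (∑ i, a i ^ 2) ≤ 1)
    (acts' : ℕ → Fin d → ℝ) (t : ℕ) :
    (wnorm (Vmat acts' t)⁻¹ a) ^ 2
        ≤ (∑ i, a i ^ 2) / (1 + playCount acts' a t * ∑ i, a i ^ 2)
    ∧ (1 ≤ playCount acts' a t →
        (wnorm (Vmat acts' t)⁻¹ a) ^ 2 ≤ 1 / playCount acts' a t) := by
  have hdot : (∑ i, a i ^ 2) = a ⬝ᵥ a := by
    simp [dotProduct, sq]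
  obtain ⟨h0, h1⟩ := keyIneq a acts' t
  have hw : (wnorm (Vmat acts' t)⁻¹ a) ^ 2 = a ⬝ᵥ (Vmat acts' t)⁻¹ *ᵥ a := by
    rw [wnorm, Real.sq_sqrt h0]
  have hpc : (playCount acts' a t : ℝ)
      = (((Finset.Ico 1 t).filter fun s => acts' s = a).card : ℝ) := rfl
  have hmain : (wnorm (Vmat acts' t)⁻¹ a) ^ 2
      ≤ (∑ i, a i ^ 2) / (1 + playCount acts' a t * ∑ i, a i ^ 2) := by
    rw [hw, hdot, hpc]
    exact h1
  refine ⟨hmain, fun hn => ?_⟩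
  have hs0 : 0 ≤ ∑ i, a i ^ 2 := Finset.sum_nonneg fun i _ => sq_nonneg _
  have hs1 : (∑ i, a i ^ 2) ≤ 1 := by
    nlinarith [Real.sq_sqrt hs0, Real.sqrt_nonneg (∑ i, a i ^ 2)]
  have hn1 : (1:ℝ) ≤ (playCount acts' a t : ℝ) := by exact_mod_cast hn
  refine le_trans hmain ?_
  rw [div_le_div_iff₀ (by nlinarith) (by linarith)]
  nlinarith

/-- **Lemma E.2 (bound on forced plays of the safe action).** For any vector `a` with
`‖a‖ ≤ 1`, any sequence `{a_s}`, and `n_t := #{s < t : a_s = a}`, one has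
`‖a‖²_{V_t⁻¹} ≤ ‖a‖²/(1 + n_t‖a‖²)`, hence `‖a‖²_{V_t⁻¹} ≤ 1/n_t` when `n_t ≥ 1`.
Consequently, if S-COLTS (which plays `a_safe` at every round where `M_t(a_safe) > Γ0/3`,
with `M_t(x) = B_t ω_t(δ) ‖x‖_{V_t⁻¹}`, `B_t = 1 + max(1, B(δ/(t(t+1))))`, and `B_t ω_t(δ)`
nondecreasing in `t`) is run with any `Γ0 > 0` and a `B`-concentrated law `μ`, then for
every horizon `T` the number of rounds `t ≤ T` at which it plays `a_safe` because
`M_t(a_safe) > Γ0/3` is at most `9 ω_T(δ)² B_T²/Γ0² + 1`. -/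
theorem forced_safe_plays (d m : ℕ)
    (asafe : Fin d → ℝ) (hasafe : Real.sqrt (∑ i, asafe i ^ 2) ≤ 1)
    (acts : ℕ → Fin d → ℝ)
    (δ Γ0 : ℝ) (hδ : δ ∈ Set.Ioc (0 : ℝ) 1) (hΓ0 : 0 < Γ0)
    (Bfun : ℝ → ℝ) (hBfun : ∀ ξ, 0 ≤ Bfun ξ)
    (Bt : ℕ → ℝ) (hBt : ∀ t, Bt t = 1 + max 1 (Bfun (δ / (t * (t + 1)))))
    (ωt : ℕ → ℝ) (hωt : ∀ t, ωt t = omrad m δ (Vmat acts t))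
    (hmono : ∀ s t : ℕ, s ≤ t → Bt s * ωt s ≤ Bt t * ωt t)
    (M : ℕ → (Fin d → ℝ) → ℝ)
    (hM : ∀ t x, M t x = Bt t * ωt t * wnorm (Vmat acts t)⁻¹ x)
    (halg : ∀ t, 1 ≤ t → Γ0 / 3 < M t asafe → acts t = asafe) :
    (∀ (a : Fin d → ℝ), Real.sqrt (∑ i, a i ^ 2) ≤ 1 → ∀ (acts' : ℕ → Fin d → ℝ) (t : ℕ),
        (wnorm (Vmat acts' t)⁻¹ a) ^ 2
            ≤ (∑ i, a i ^ 2) / (1 + playCount acts' a t * ∑ i, a i ^ 2)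
        ∧ (1 ≤ playCount acts' a t →
            (wnorm (Vmat acts' t)⁻¹ a) ^ 2 ≤ 1 / playCount acts' a t))
    ∧ ∀ T : ℕ,
        (((Finset.Icc 1 T).filter fun t => Γ0 / 3 < M t asafe).card : ℝ)
          ≤ 9 * (ωt T) ^ 2 * (Bt T) ^ 2 / Γ0 ^ 2 + 1 := by
  refine ⟨fun a ha acts' t => part1 a ha acts' t, fun T => ?_⟩
  set S := (Finset.Icc 1 T).filter fun t => Γ0 / 3 < M t asafe with hSdef
  rcases S.eq_empty_or_nonempty with hS | hS
  · rw [hS]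
    simp only [Finset.card_empty, Nat.cast_zero]
    have : 0 ≤ 9 * (ωt T) ^ 2 * (Bt T) ^ 2 / Γ0 ^ 2 := by positivity
    linarith
  · set t0 := S.max' hS with ht0def
    have ht0S : t0 ∈ S := S.max'_mem hS
    obtain ⟨ht0mem, ht0M⟩ := Finset.mem_filter.mp ht0S
    obtain ⟨ht01, ht0T⟩ := Finset.mem_Icc.mp ht0mem
    set n := playCount acts asafe t0 with hndef
    -- card bound
    have hsub : S.erase t0 ⊆ (Finset.Ico 1 t0).filter fun s => acts s = asafe := by
      intro s hs
      obtain ⟨hne, hsS⟩ := Finset.mem_erase.mp hs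
      obtain ⟨hsmem, hsM⟩ := Finset.mem_filter.mp hsS
      obtain ⟨hs1, hsT⟩ := Finset.mem_Icc.mp hsmem
      have hslt : s < t0 := lt_of_le_of_ne (S.le_max' s hsS) hne
      exact Finset.mem_filter.mpr ⟨Finset.mem_Ico.mpr ⟨hs1, hslt⟩, halg s hs1 hsM⟩
    have hcard : S.card ≤ n + 1 := by
      have h1 := Finset.card_le_card hsub
      rw [Finset.card_erase_of_mem ht0S] at h1
      have : ((Finset.Ico 1 t0).filter fun s => acts s = asafe).card = n := rfl
      omega
    -- now the analytic bound on n
    have hRHS0 : 0 ≤ 9 * (ωt T) ^ 2 * (Bt T) ^ 2 / Γ0 ^ 2 := by positivity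
    rcases Nat.eq_zero_or_pos n with hn0 | hn1
    · have : S.card ≤ 1 := by omega
      have h2 : (S.card : ℝ) ≤ 1 := by exact_mod_cast this
      linarith
    · -- n ≥ 1
      set w := wnorm (Vmat acts t0)⁻¹ asafe with hwdef
      have hw0 : 0 ≤ w := Real.sqrt_nonneg _
      have hwsq : w ^ 2 ≤ 1 / n := (part1 asafe hasafe acts t0).2 hn1
      have hMt0 : Γ0 / 3 < Bt t0 * ωt t0 * w := by rw [← hM]; exact ht0M
      have hmono' := hmono t0 T ht0T
      have hT0 : Γ0 / 3 < Bt T * ωt T * w := by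
        rcases le_or_gt (Bt t0 * ωt t0) (0:ℝ) with h | h
        · exfalso; nlinarith
        · have := mul_le_mul_of_nonneg_right hmono' hw0
          linarith
      have hBT0 : 0 < Bt T * ωt T := by nlinarith
      have hnR : (1:ℝ) ≤ (n:ℝ) := by exact_mod_cast hn1
      have hnw : (n:ℝ) * w ^ 2 ≤ 1 := by
        rw [div_eq_inv_mul, mul_one] at hwsq
        calc (n:ℝ) * w ^ 2 ≤ (n:ℝ) * ((n:ℝ)⁻¹) := by
              apply mul_le_mul_of_nonneg_left hwsq (by linarith)
          _ = 1 := mul_inv_cancel₀ (by linarith)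
      have hsq : (Γ0 / 3) ^ 2 ≤ (Bt T * ωt T * w) ^ 2 := by
        apply pow_le_pow_left₀ (by positivity) hT0.le
      have h4 : (n:ℝ) * (Γ0 / 3) ^ 2 ≤ (Bt T * ωt T) ^ 2 := by
        calc (n:ℝ) * (Γ0 / 3) ^ 2 ≤ (n:ℝ) * (Bt T * ωt T * w) ^ 2 :=
              mul_le_mul_of_nonneg_left hsq (by linarith)
          _ = (Bt T * ωt T) ^ 2 * ((n:ℝ) * w ^ 2) := by ring
          _ ≤ (Bt T * ωt T) ^ 2 * 1 := by
              apply mul_le_mul_of_nonneg_left hnw (sq_nonneg _)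
          _ = (Bt T * ωt T) ^ 2 := mul_one _
      have hnbound : (n:ℝ) ≤ 9 * (ωt T) ^ 2 * (Bt T) ^ 2 / Γ0 ^ 2 := by
        rw [le_div_iff₀ (by positivity)]
        nlinarith [h4]
      have hcardR : (S.card : ℝ) ≤ (n:ℝ) + 1 := by exact_mod_cast hcard
      linarith
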